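/- For fixed constants r > 0, μ > r, n ∈ ℕ with n ≥ 1, and T > 0, the function f(x) = exp(2rT)·x²·(exp((log x)²/((μ−r)²·n·T)) − 1) is strictly convex on the interval [1, ∞). -/

import Mathlib

open Real

theorem strictConvexOn_variance_function
    (r μ T : ℝ) (n : ℕ) (hr : 0 < r) (hμ : r < μ) (hn : 1 ≤ n) (hT : 0 < T) :
    StrictConvexOn ℝ (Set.Ici (1 : ℝ))
      (fun x : ℝ =>
        Real.exp (2 * r * T) * x ^ 2 *
          (Real.exp ((Real.log x) ^ 2 / ((μ - r) ^ 2 * n * T)) - 1)) := by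
  have hμr : (0:ℝ) < μ - r := sub_pos.mpr hμ
  have hn0 : (0:ℝ) < (n:ℝ) := by exact_mod_cast Nat.lt_of_lt_of_le Nat.zero_lt_one hn
  set b : ℝ := (μ - r) ^ 2 * n * T with hb_def
  have hb : 0 < b := mul_pos (mul_pos (pow_pos hμr 2) hn0) hT
  set C : ℝ := Real.exp (2 * r * T) with hC_def
  have hC : 0 < C := Real.exp_pos _
  set g : ℝ → ℝ := fun x : ℝ =>
      C * x ^ 2 * (Real.exp ((Real.log x) ^ 2 / b) - 1) with hg_def
  set g' : ℝ → ℝ := fun x : ℝ =>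
      C * (2 * x) * (Real.exp ((Real.log x) ^ 2 / b) - 1) +
        C * x ^ 2 * (Real.exp ((Real.log x) ^ 2 / b) * (2 * Real.log x * x⁻¹ / b)) with hg'_def
  have hd1 : ∀ x : ℝ, 0 < x → HasDerivAt g (g' x) x := by
    intro x hx
    have hlog : HasDerivAt Real.log x⁻¹ x := Real.hasDerivAt_log (ne_of_gt hx)
    have h1 : HasDerivAt (fun y : ℝ => (Real.log y) ^ 2 / b)
        ((2:ℕ) * Real.log x ^ 1 * x⁻¹ / b) x := (hlog.pow 2).div_const b
    have h2 := h1.exp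
    have h3 := h2.sub_const 1
    have h4 : HasDerivAt (fun y : ℝ => C * y ^ 2) (C * (2 * x)) x := by
      have := (hasDerivAt_pow 2 x).const_mul C
      simpa using this
    have h5 := h4.mul h3
    refine h5.congr_deriv ?_
    simp [hg'_def]
  set g'' : ℝ → ℝ := fun x : ℝ =>
      2 * C * (Real.exp ((Real.log x) ^ 2 / b) *
        (1 + 3 * Real.log x / b + 2 * (Real.log x) ^ 2 / b ^ 2 + 1 / b) - 1) with hg''_def
  have hd2 : ∀ x : ℝ, 0 < x → HasDerivAt g' (g'' x) x := by
    intro x hx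
    have hlog : HasDerivAt Real.log x⁻¹ x := Real.hasDerivAt_log (ne_of_gt hx)
    have h1 : HasDerivAt (fun y : ℝ => (Real.log y) ^ 2 / b)
        ((2:ℕ) * Real.log x ^ 1 * x⁻¹ / b) x := (hlog.pow 2).div_const b
    have h2 := h1.exp
    have h3 := h2.sub_const 1
    -- first summand: (C * (2 * y)) * (E y - 1)
    have h4 : HasDerivAt (fun y : ℝ => C * (2 * y)) (C * 2) x := by
      simpa using ((hasDerivAt_id x).const_mul 2).const_mul C
    have h5 := h4.mul h3
    -- second summand: (C * y^2) * (E y * (2 * log y * y⁻¹ / b))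
    have h6 : HasDerivAt (fun y : ℝ => C * y ^ 2) (C * (2 * x)) x := by
      simpa using (hasDerivAt_pow 2 x).const_mul C
    have h7 : HasDerivAt (fun y : ℝ => 2 * Real.log y * y⁻¹ / b)
        ((2 * x⁻¹ * x⁻¹ + 2 * Real.log x * (-(x ^ 2)⁻¹)) / b) x := by
      have ha : HasDerivAt (fun y : ℝ => 2 * Real.log y) (2 * x⁻¹) x := hlog.const_mul 2
      have hb' : HasDerivAt (fun y : ℝ => y⁻¹) (-(x ^ 2)⁻¹) x := by
        simpa using (hasDerivAt_inv (ne_of_gt hx))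
      simpa using (ha.mul hb').div_const b
    have h8 := h2.mul h7
    have h9 := h6.mul h8
    have h10 := h5.add h9
    refine h10.congr_deriv ?_
    have hx' : x ≠ 0 := ne_of_gt hx
    simp only [hg''_def, Pi.mul_apply]
    field_simp
    ring
  apply strictConvexOn_of_deriv2_pos (convex_Ici 1)
  · intro x hx
    have hx0 : 0 < x := lt_of_lt_of_le one_pos hx
    exact ((hd1 x hx0).continuousAt).continuousWithinAt
  · intro x hx
    rw [interior_Ici] at hx
    have hx0 : (0:ℝ) < x := lt_trans one_pos hx
    have hev : deriv g =ᶠ[nhds x] g' := by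
      filter_upwards [isOpen_Ioi.mem_nhds (show (0:ℝ) < x from hx0)] with y hy
      exact (hd1 y hy).deriv
    have h2' : deriv^[2] g x = g'' x := by
      have : deriv^[2] g x = deriv (deriv g) x := rfl
      rw [this, hev.deriv_eq, (hd2 x hx0).deriv]
    rw [h2']
    have hL : 0 < Real.log x := Real.log_pos hx
    have hE : 1 ≤ Real.exp ((Real.log x) ^ 2 / b) := by
      apply Real.one_le_exp
      positivity
    have hM : 1 < 1 + 3 * Real.log x / b + 2 * (Real.log x) ^ 2 / b ^ 2 + 1 / b := by
      have h1 : 0 < 3 * Real.log x / b := by positivity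
      have h2 : 0 < 2 * (Real.log x) ^ 2 / b ^ 2 := by positivity
      have h3 : 0 < 1 / b := by positivity
      linarith
    have : 1 < Real.exp ((Real.log x) ^ 2 / b) *
        (1 + 3 * Real.log x / b + 2 * (Real.log x) ^ 2 / b ^ 2 + 1 / b) := by
      nlinarith
    simp only [hg''_def]
    nlinarith
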